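/- For every rational number p/q there exists a unique Farey pair x/y, z/w of extended rationals such that p/q = (x/y) ⊕ (z/w) ⊕ (z/w), i.e., p = x + 2z and q = y + 2w with xw - yz = ±1. -/

import Mathlib

/-- Two fractions `a/b`, `c/d` form a Farey pair when `a*d - b*c = ±1`. -/
def FareyPair (a b : ℤ × ℤ) : Prop :=
  a.1 * b.2 - a.2 * b.1 = 1 ∨ a.1 * b.2 - a.2 * b.1 = -1

/-- An extended rational: a fraction in lowest terms with nonnegative denominator,
where the fraction with denominator `0` is `1/0 = ∞`. -/
def IsExtRat (v : ℤ × ℤ) : Prop :=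
  0 ≤ v.2 ∧ Int.gcd v.1 v.2 = 1 ∧ (v.2 = 0 → v.1 = 1)

/-- For every rational `p/q` there is a unique Farey pair `x/y`, `z/w` of extended
rationals with `p/q = (x/y) ⊕ (z/w) ⊕ (z/w)`, i.e. `p = x + 2z`, `q = y + 2w` with
`x*w - y*z = ±1`. -/
theorem exists_unique_double_decomposition (p q : ℤ) (hq : 0 < q) (hpq : Int.gcd p q = 1) :
    ∃! v : (ℤ × ℤ) × (ℤ × ℤ),
      IsExtRat v.1 ∧ IsExtRat v.2 ∧ FareyPair v.1 v.2 ∧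
      p = v.1.1 + 2 * v.2.1 ∧ q = v.1.2 + 2 * v.2.2 := by
  have hco : IsCoprime p q := Int.isCoprime_iff_gcd_eq_one.mpr hpq
  -- existence of suitable z, w, ε
  obtain ⟨z, w, ε, hε, hzw, hw0, hw2, hwz, hqz⟩ :
      ∃ z w ε : ℤ, (ε = 1 ∨ ε = -1) ∧ p * w - q * z = ε ∧ 0 ≤ w ∧ 2 * w ≤ q ∧
        (w = 0 → z = 1) ∧ (q = 2 * w → p - 2 * z = 1) := by
    rcases eq_or_lt_of_le (show (1 : ℤ) ≤ q by omega) with h1 | h2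
    · exact ⟨1, 0, -1, Or.inr rfl, by linarith, le_refl 0, by omega, fun _ => rfl,
        by omega⟩
    · obtain ⟨u, v, huv⟩ := hco
      have hqne : q ≠ 0 := by omega
      have h0 : 0 ≤ u % q := Int.emod_nonneg u hqne
      have h1 : u % q < q := Int.emod_lt_of_pos u hq
      have hdvd : q ∣ p * (u % q) - 1 := by
        refine ⟨-(v + p * (u / q)), ?_⟩
        rw [Int.emod_def]
        linear_combination huv
      obtain ⟨k, hk⟩ := hdvd
      have hE : p * (u % q) - q * k = 1 := by linarith
      have hw0ne : u % q ≠ 0 := by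
        intro h
        rw [h] at hE
        have : q ∣ 1 := ⟨-k, by linarith⟩
        have := Int.le_of_dvd one_pos this
        omega
      by_cases hle : 2 * (u % q) ≤ q
      · refine ⟨k, u % q, 1, Or.inl rfl, hE, h0, hle, fun h => absurd h hw0ne, ?_⟩
        intro hq2
        have hprod : (u % q) * (p - 2 * k) = 1 := by linear_combination hE + k * hq2
        have hle1 : u % q ≤ 1 := Int.le_of_dvd one_pos ⟨p - 2 * k, hprod.symm⟩
        have : u % q = 1 := by omega
        rw [this] at hprod
        linarith
      · refine ⟨p - k, q - u % q, -1, Or.inr rfl, by linear_combination -hE, by omega,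
          by omega, by omega, by omega⟩
  -- uniqueness key
  have key : ∀ v₁ v₂ : (ℤ × ℤ) × (ℤ × ℤ),
      (IsExtRat v₁.1 ∧ IsExtRat v₁.2 ∧ FareyPair v₁.1 v₁.2 ∧
        p = v₁.1.1 + 2 * v₁.2.1 ∧ q = v₁.1.2 + 2 * v₁.2.2) →
      (IsExtRat v₂.1 ∧ IsExtRat v₂.2 ∧ FareyPair v₂.1 v₂.2 ∧
        p = v₂.1.1 + 2 * v₂.2.1 ∧ q = v₂.1.2 + 2 * v₂.2.2) → v₁ = v₂ := by
    rintro ⟨⟨x₁, y₁⟩, ⟨z₁, w₁⟩⟩ ⟨⟨x₂, y₂⟩, ⟨z₂, w₂⟩⟩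
      ⟨⟨hy₁0, _, hy₁1⟩, ⟨hw₁0, _, hwz₁⟩, hf₁, hp₁, hq₁⟩
      ⟨⟨hy₂0, _, hy₂1⟩, ⟨hw₂0, _, hwz₂⟩, hf₂, hp₂, hq₂⟩
    simp only [FareyPair] at hf₁ hf₂
    simp only at hy₁0 hy₁1 hw₁0 hwz₁ hp₁ hq₁ hy₂0 hy₂1 hw₂0 hwz₂ hp₂ hq₂
    -- reduce to equations p*wᵢ - q*zᵢ = εᵢ
    have samesign : ∀ z w z' w' : ℤ, 0 ≤ w → 0 ≤ w' → 2 * w ≤ q → 2 * w' ≤ q →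
        p * w - q * z = p * w' - q * z' → w = w' ∧ z = z' := by
      intro z w z' w' hw hw' h2w h2w' heq
      have hd : q ∣ (w - w') * p := ⟨z - z', by linear_combination heq⟩
      have hd2 : q ∣ w - w' := hco.symm.dvd_of_dvd_mul_right hd
      have hww : w - w' = 0 := by
        refine Int.eq_zero_of_abs_lt_dvd hd2 ?_
        rw [abs_lt]; omega
      constructor
      · omega
      · have : q * z = q * z' := by linear_combination -heq + p * hww
        exact mul_left_cancel₀ (by omega) this
    rcases hf₁ with h₁ | h₁ <;> rcases hf₂ with h₂ | h₂
    · -- both +1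
      have E₁ : p * w₁ - q * z₁ = 1 := by linear_combination h₁ + w₁ * hp₁ - z₁ * hq₁
      have E₂ : p * w₂ - q * z₂ = 1 := by linear_combination h₂ + w₂ * hp₂ - z₂ * hq₂
      obtain ⟨hw, hz⟩ := samesign z₁ w₁ z₂ w₂ hw₁0 hw₂0 (by omega) (by omega)
        (by rw [E₁, E₂])
      simp only [Prod.mk.injEq]
      omega
    · -- +1 and -1
      have E₁ : p * w₁ - q * z₁ = 1 := by linear_combination h₁ + w₁ * hp₁ - z₁ * hq₁
      have E₂ : p * w₂ - q * z₂ = -1 := by linear_combination h₂ + w₂ * hp₂ - z₂ * hq₂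
      have hd : q ∣ (w₁ + w₂) * p := ⟨z₁ + z₂, by linear_combination E₁ + E₂⟩
      have hd2 : q ∣ w₁ + w₂ := hco.symm.dvd_of_dvd_mul_right hd
      obtain ⟨c, hc⟩ := hd2
      have hc01 : w₁ + w₂ = 0 ∨ w₁ + w₂ = q := by
        have hcb1 : 0 ≤ c := by
          by_contra h
          have hc1 : c ≤ -1 := by omega
          have h2 := mul_le_mul_of_nonneg_left hc1 (le_of_lt hq)
          rw [mul_neg_one] at h2
          linarith
        have hcb2 : c ≤ 1 := by
          by_contra h
          have hc1 : (2 : ℤ) ≤ c := by omega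
          have h2 := mul_le_mul_of_nonneg_left hc1 (le_of_lt hq)
          linarith
        have : c = 0 ∨ c = 1 := by omega
        rcases this with h | h <;> rw [h] at hc <;> [left; right] <;> linarith
      rcases hc01 with h | h
      · -- w₁ = w₂ = 0, contradiction
        have hw1 : w₁ = 0 := by omega
        have hw2' : w₂ = 0 := by omega
        have hz1 : z₁ = 1 := hwz₁ hw1
        have hz2 : z₂ = 1 := hwz₂ hw2'
        rw [hw1, hz1] at E₁
        rw [hw2', hz2] at E₂
        omega
      · -- 2w₁ = 2w₂ = q, so y₁ = y₂ = 0, x₁ = x₂ = 1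
        have hy1 : y₁ = 0 := by omega
        have hy2 : y₂ = 0 := by omega
        have hx1 : x₁ = 1 := hy₁1 hy1
        have hx2 : x₂ = 1 := hy₂1 hy2
        simp only [Prod.mk.injEq]
        omega
    · -- -1 and +1 (symmetric)
      have E₁ : p * w₁ - q * z₁ = -1 := by linear_combination h₁ + w₁ * hp₁ - z₁ * hq₁
      have E₂ : p * w₂ - q * z₂ = 1 := by linear_combination h₂ + w₂ * hp₂ - z₂ * hq₂
      have hd : q ∣ (w₁ + w₂) * p := ⟨z₁ + z₂, by linear_combination E₁ + E₂⟩
      have hd2 : q ∣ w₁ + w₂ := hco.symm.dvd_of_dvd_mul_right hd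
      obtain ⟨c, hc⟩ := hd2
      have hc01 : w₁ + w₂ = 0 ∨ w₁ + w₂ = q := by
        have hcb1 : 0 ≤ c := by
          by_contra h
          have hc1 : c ≤ -1 := by omega
          have h2 := mul_le_mul_of_nonneg_left hc1 (le_of_lt hq)
          rw [mul_neg_one] at h2
          linarith
        have hcb2 : c ≤ 1 := by
          by_contra h
          have hc1 : (2 : ℤ) ≤ c := by omega
          have h2 := mul_le_mul_of_nonneg_left hc1 (le_of_lt hq)
          linarith
        have : c = 0 ∨ c = 1 := by omega
        rcases this with h | h <;> rw [h] at hc <;> [left; right] <;> linarith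
      rcases hc01 with h | h
      · have hw1 : w₁ = 0 := by omega
        have hw2' : w₂ = 0 := by omega
        have hz1 : z₁ = 1 := hwz₁ hw1
        have hz2 : z₂ = 1 := hwz₂ hw2'
        rw [hw1, hz1] at E₁
        rw [hw2', hz2] at E₂
        omega
      · have hy1 : y₁ = 0 := by omega
        have hy2 : y₂ = 0 := by omega
        have hx1 : x₁ = 1 := hy₁1 hy1
        have hx2 : x₂ = 1 := hy₂1 hy2
        simp only [Prod.mk.injEq]
        omega
    · -- both -1
      have E₁ : p * w₁ - q * z₁ = -1 := by linear_combination h₁ + w₁ * hp₁ - z₁ * hq₁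
      have E₂ : p * w₂ - q * z₂ = -1 := by linear_combination h₂ + w₂ * hp₂ - z₂ * hq₂
      obtain ⟨hw, hz⟩ := samesign z₁ w₁ z₂ w₂ hw₁0 hw₂0 (by omega) (by omega)
        (by rw [E₁, E₂])
      simp only [Prod.mk.injEq]
      omega
  -- assemble
  have hmain : IsExtRat ((p - 2 * z, q - 2 * w), (z, w)).1 ∧
      IsExtRat ((p - 2 * z, q - 2 * w), (z, w)).2 ∧
      FareyPair ((p - 2 * z, q - 2 * w), (z, w)).1 ((p - 2 * z, q - 2 * w), (z, w)).2 ∧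
      p = ((p - 2 * z, q - 2 * w), (z, w)).1.1 + 2 * ((p - 2 * z, q - 2 * w), (z, w)).2.1 ∧
      q = ((p - 2 * z, q - 2 * w), (z, w)).1.2 + 2 * ((p - 2 * z, q - 2 * w), (z, w)).2.2 := by
    refine ⟨⟨?_, ?_, ?_⟩, ⟨?_, ?_, ?_⟩, ?_, ?_, ?_⟩
    · show (0 : ℤ) ≤ q - 2 * w
      omega
    · show Int.gcd (p - 2 * z) (q - 2 * w) = 1
      rw [← Int.isCoprime_iff_gcd_eq_one]
      rcases hε with h | h
      · rw [h] at hzw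
        exact ⟨w, -z, by linear_combination hzw⟩
      · rw [h] at hzw
        exact ⟨-w, z, by linear_combination -hzw⟩
    · show q - 2 * w = 0 → p - 2 * z = 1
      intro h
      exact hqz (by omega)
    · show (0 : ℤ) ≤ w
      exact hw0
    · show Int.gcd z w = 1
      rw [← Int.isCoprime_iff_gcd_eq_one]
      rcases hε with h | h
      · rw [h] at hzw
        exact ⟨-q, p, by linear_combination hzw⟩
      · rw [h] at hzw
        exact ⟨q, -p, by linear_combination -hzw⟩
    · show w = 0 → z = 1
      exact hwz
    · show (p - 2 * z) * w - (q - 2 * w) * z = 1 ∨ (p - 2 * z) * w - (q - 2 * w) * z = -1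
      rcases hε with h | h
      · rw [h] at hzw
        exact Or.inl (by linear_combination hzw)
      · rw [h] at hzw
        exact Or.inr (by linear_combination hzw)
    · show p = p - 2 * z + 2 * z
      ring
    · show q = q - 2 * w + 2 * w
      ring
  exact ⟨((p - 2 * z, q - 2 * w), (z, w)), hmain,
    fun v' hv' => key v' ((p - 2 * z, q - 2 * w), (z, w)) hv' hmain⟩
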